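/- For positive reals α*, β*, h with |h| < β*, the limit as δ → 0⁺ of (1/(2π))·∫_{π−δ^{1/3}}^{π+δ^{1/3}} [1/(δh − √(δ²β*² + α*²(p−π)²)) + 1/(δh + √(δ²β*² + α*²(p−π)²))] dp equals −(1/(β*·α*))·h/√(1 − (h/β*)²). -/

import Mathlib

open Real Filter

lemma int_aux (a b L R : ℝ) (ha : 0 < a) (hb : 0 < b) :
    ∫ x in L..R, 1 / (a ^ 2 * x ^ 2 + b ^ 2)
      = (Real.arctan (a / b * R) - Real.arctan (a / b * L)) / (a * b) := by
  have hb' : b ≠ 0 := hb.ne'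
  have ha' : a ≠ 0 := ha.ne'
  have hderiv : ∀ x ∈ Set.uIcc L R, HasDerivAt (fun x => Real.arctan (a / b * x) / (a * b))
      (1 / (a ^ 2 * x ^ 2 + b ^ 2)) x := by
    intro x _
    have h1 : HasDerivAt (fun x : ℝ => a / b * x) (a / b) x := by
      simpa using (hasDerivAt_id x).const_mul (a / b)
    have h2 := (Real.hasDerivAt_arctan (a / b * x)).comp x h1
    have h3 := h2.div_const (a * b)
    refine h3.congr_deriv ?_
    have hd : a ^ 2 * x ^ 2 + b ^ 2 ≠ 0 := by positivity
    have hd2 : 1 + (a / b * x) ^ 2 ≠ 0 := by positivity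
    field_simp
    ring
  have hcont : IntervalIntegrable (fun x => 1 / (a ^ 2 * x ^ 2 + b ^ 2))
      MeasureTheory.volume L R := by
    apply Continuous.intervalIntegrable
    apply continuous_const.div
    · continuity
    · intro x; positivity
  rw [intervalIntegral.integral_eq_sub_of_hasDerivAt hderiv hcont]
  ring

/-- As `δ → 0⁺`, the normalized resonance integral near the Dirac point converges to
`−(1/(β*α*))·h/√(1−(h/β*)²)`. -/
theorem resonance_integral_limit (αs βs : ℝ) (hα : 0 < αs) (hβ : 0 < βs)
    (h : ℝ) (hh : |h| < βs) :
    Tendsto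
      (fun δ : ℝ =>
        (1 / (2 * π)) *
          ∫ p in (π - δ ^ ((1 : ℝ) / 3))..(π + δ ^ ((1 : ℝ) / 3)),
            (1 / (δ * h - Real.sqrt (δ ^ 2 * βs ^ 2 + αs ^ 2 * (p - π) ^ 2)) +
              1 / (δ * h + Real.sqrt (δ ^ 2 * βs ^ 2 + αs ^ 2 * (p - π) ^ 2))))
      (nhdsWithin 0 (Set.Ioi 0))
      (nhds (-(1 / (βs * αs)) * h / Real.sqrt (1 - (h / βs) ^ 2))) := by
  have habs := abs_lt.mp hh
  have hβh : h ^ 2 < βs ^ 2 := by nlinarith [sq_abs h, abs_nonneg h]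
  set c := Real.sqrt (βs ^ 2 - h ^ 2) with hcdef
  have hc0 : 0 < c := Real.sqrt_pos.mpr (by linarith)
  have hc2 : c ^ 2 = βs ^ 2 - h ^ 2 := Real.sq_sqrt (by linarith)
  have hπ : (0:ℝ) < π := Real.pi_pos
  -- the closed form
  set G : ℝ → ℝ := fun δ => -(2 * h / (π * αs * c)) * Real.arctan (αs / c * δ ^ (-(2:ℝ)/3))
    with hGdef
  have key : ∀ δ ∈ Set.Ioi (0:ℝ),
      (1 / (2 * π)) *
          (∫ p in (π - δ ^ ((1 : ℝ) / 3))..(π + δ ^ ((1 : ℝ) / 3)),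
            (1 / (δ * h - Real.sqrt (δ ^ 2 * βs ^ 2 + αs ^ 2 * (p - π) ^ 2)) +
              1 / (δ * h + Real.sqrt (δ ^ 2 * βs ^ 2 + αs ^ 2 * (p - π) ^ 2)))) = G δ := by
    intro δ hδ0
    simp only [Set.mem_Ioi] at hδ0
    set ε := δ ^ ((1:ℝ)/3) with hεdef
    have hε0 : 0 < ε := Real.rpow_pos_of_pos hδ0 _
    have hb0 : 0 < δ * c := by positivity
    have hpt : ∀ p : ℝ,
        (1 / (δ * h - Real.sqrt (δ ^ 2 * βs ^ 2 + αs ^ 2 * (p - π) ^ 2)) +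
          1 / (δ * h + Real.sqrt (δ ^ 2 * βs ^ 2 + αs ^ 2 * (p - π) ^ 2)))
        = (-(2 * δ * h)) * (1 / (αs ^ 2 * (p - π) ^ 2 + (δ * c) ^ 2)) := by
      intro p
      set S := Real.sqrt (δ ^ 2 * βs ^ 2 + αs ^ 2 * (p - π) ^ 2) with hSdef
      have hS2 : S ^ 2 = δ ^ 2 * βs ^ 2 + αs ^ 2 * (p - π) ^ 2 :=
        Real.sq_sqrt (by positivity)
      have hSb : δ * βs ≤ S := by
        rw [hSdef]
        calc δ * βs = Real.sqrt ((δ * βs) ^ 2) := (Real.sqrt_sq (by positivity)).symm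
        _ ≤ _ := Real.sqrt_le_sqrt (by nlinarith [sq_nonneg (αs * (p - π))])
      have hSh : δ * |h| < S := lt_of_lt_of_le (by nlinarith) hSb
      have hne1 : δ * h - S ≠ 0 := by
        have : δ * h ≤ δ * |h| := mul_le_mul_of_nonneg_left (le_abs_self h) hδ0.le
        nlinarith
      have hne2 : δ * h + S ≠ 0 := by
        have : -(δ * |h|) ≤ δ * h := by nlinarith [neg_abs_le h]
        nlinarith
      have hD : αs ^ 2 * (p - π) ^ 2 + (δ * c) ^ 2 ≠ 0 := by positivity
      have hden : (δ * h - S) * (δ * h + S) = -(αs ^ 2 * (p - π) ^ 2 + (δ * c) ^ 2) := by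
        have e1 : (δ * h - S) * (δ * h + S) = δ ^ 2 * h ^ 2 - S ^ 2 := by ring
        rw [e1, hS2]
        have e2 : (δ * c) ^ 2 = δ ^ 2 * c ^ 2 := by ring
        rw [e2, hc2]; ring
      field_simp
      linear_combination (2 * δ * h) * hden
    rw [intervalIntegral.integral_congr (fun p _ => hpt p)]
    rw [intervalIntegral.integral_const_mul]
    have hshift : (∫ p in (π - ε)..(π + ε),
        1 / (αs ^ 2 * (p - π) ^ 2 + (δ * c) ^ 2))
        = ∫ x in (-ε)..ε, 1 / (αs ^ 2 * x ^ 2 + (δ * c) ^ 2) := by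
      have := intervalIntegral.integral_comp_sub_right
        (fun x => 1 / (αs ^ 2 * x ^ 2 + (δ * c) ^ 2)) π (a := π - ε) (b := π + ε)
      simpa using this
    rw [hshift, int_aux αs (δ * c) (-ε) ε hα hb0]
    have harg : αs / (δ * c) * ε = αs / c * δ ^ (-(2:ℝ)/3) := by
      have hεδ : ε / δ = δ ^ (-(2:ℝ)/3) := by
        rw [hεdef, show (-(2:ℝ)/3) = (1:ℝ)/3 - 1 by norm_num,
          Real.rpow_sub hδ0, Real.rpow_one]
      rw [← hεδ]
      field_simp
    rw [mul_neg, Real.arctan_neg]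
    rw [hGdef]
    simp only
    rw [← harg]
    have hδ' : δ ≠ 0 := hδ0.ne'
    field_simp
    ring
  have hlim1 : Tendsto (fun δ : ℝ => δ ^ ((2:ℝ)/3)) (nhdsWithin 0 (Set.Ioi 0))
      (nhdsWithin 0 (Set.Ioi 0)) := by
    apply tendsto_nhdsWithin_of_tendsto_nhds_of_eventually_within
    · have h0 := (Real.continuousAt_rpow_const 0 ((2:ℝ)/3) (Or.inr (by norm_num))).tendsto
      rw [Real.zero_rpow (by norm_num)] at h0
      exact h0.mono_left nhdsWithin_le_nhds
    · filter_upwards [self_mem_nhdsWithin] with x hx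
      exact Real.rpow_pos_of_pos hx _
  have hlim2 : Tendsto (fun δ : ℝ => δ ^ (-(2:ℝ)/3)) (nhdsWithin 0 (Set.Ioi 0)) atTop := by
    have := tendsto_inv_nhdsGT_zero.comp hlim1
    refine this.congr' ?_
    filter_upwards [self_mem_nhdsWithin] with x hx
    simp only [Function.comp]
    rw [← Real.rpow_neg (le_of_lt hx)]
    norm_num
  have harct : Tendsto (fun δ : ℝ => Real.arctan (αs / c * δ ^ (-(2:ℝ)/3)))
      (nhdsWithin 0 (Set.Ioi 0)) (nhds (π/2)) := by
    have h1 : Tendsto (fun δ : ℝ => αs / c * δ ^ (-(2:ℝ)/3)) (nhdsWithin 0 (Set.Ioi 0)) atTop :=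
      hlim2.const_mul_atTop (by positivity)
    exact (Real.tendsto_arctan_atTop.mono_right nhdsWithin_le_nhds).comp h1
  have hfin : Tendsto G (nhdsWithin 0 (Set.Ioi 0)) (nhds (-(2 * h / (π * αs * c)) * (π/2))) :=
    harct.const_mul _
  have hval : -(2 * h / (π * αs * c)) * (π/2)
      = -(1 / (βs * αs)) * h / Real.sqrt (1 - (h / βs) ^ 2) := by
    have hsq : Real.sqrt (1 - (h / βs) ^ 2) = c / βs := by
      rw [show (1 : ℝ) - (h / βs) ^ 2 = (βs ^ 2 - h ^ 2) / βs ^ 2 by field_simp,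
        Real.sqrt_div (by linarith) _, Real.sqrt_sq hβ.le]
    rw [hsq, hcdef]
    field_simp
  rw [hval] at hfin
  exact hfin.congr' (Filter.eventuallyEq_of_mem self_mem_nhdsWithin fun δ hδ => (key δ hδ).symm)
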